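/- Let μ_1, ..., μ_k be nonzero integers, r_1, ..., r_k positive integers, and suppose there exist indices i, j with μ_i > 0 and μ_j < 0. Then the residue of the rational function f(z) = Π_{i=1}^k (1 - z^{-μ_i})^{-r_i} is zero: the expansion of f in powers of z has lowest-degree term of positive degree, and the expansion in powers of z^{-1} has lowest-degree term of positive degree in z^{-1}, so both constant coefficients vanish. -/

import Mathlib

section
open HahnSeries

lemma one_sub_single_ne_zero {μ : ℤ} (hμ : μ ≠ 0) :
    ((1 : LaurentSeries ℚ) - single μ 1) ≠ 0 := by
  intro h
  have := congrArg (fun x => HahnSeries.coeff x 0) h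
  simp [coeff_single, hμ.symm] at this

lemma order_one_sub_single {μ : ℤ} (hμ : μ ≠ 0) :
    ((1 : LaurentSeries ℚ) - single μ 1).order = min μ 0 := by
  have hne := one_sub_single_ne_zero hμ
  have hcoeff : ((1 : LaurentSeries ℚ) - single μ 1).coeff (min μ 0) ≠ 0 := by
    rcases lt_or_gt_of_ne hμ with h | h
    · rw [min_eq_left h.le]
      simp [coeff_single, hμ]
    · rw [min_eq_right h.le]
      simp [coeff_single, h.ne]
  apply le_antisymm (order_le_of_coeff_ne_zero hcoeff)
  by_contra hlt
  push_neg at hlt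
  have h0 : ((1 : LaurentSeries ℚ) - single μ 1).coeff
      ((1 - single μ 1 : LaurentSeries ℚ).order) = 0 := by
    have h1 : (1 - single μ 1 : LaurentSeries ℚ).order ≠ 0 :=
      (hlt.trans_le (min_le_right _ _)).ne
    have h2 : (1 - single μ 1 : LaurentSeries ℚ).order ≠ μ :=
      (hlt.trans_le (min_le_left _ _)).ne
    simp [coeff_single, h1, h2]
  exact hne (coeff_order_eq_zero.mp h0)

lemma aux_coeff_zero (k : ℕ) (μ : Fin k → ℤ) (r : Fin k → ℕ)
    (hμ : ∀ i, μ i ≠ 0) (hr : ∀ i, 0 < r i) (hneg : ∃ j, μ j < 0) :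
    (((∏ i, (1 - RatFunc.X ^ (μ i)) ^ (r i) : RatFunc ℚ)⁻¹ : LaurentSeries ℚ)).coeff 0 = 0 := by
  set F : RatFunc ℚ := ∏ i, (1 - RatFunc.X ^ (μ i)) ^ (r i) with hFdef
  have hF : (F : LaurentSeries ℚ) = ∏ i, ((1 : LaurentSeries ℚ) - single (μ i) 1) ^ (r i) := by
    rw [show (F : LaurentSeries ℚ) = @algebraMap (RatFunc ℚ) (LaurentSeries ℚ) _ _ (RatFunc.liftAlgebra _ _) F from rfl, hFdef, map_prod]
    refine Finset.prod_congr rfl fun i _ => ?_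
    rw [map_pow, map_sub, map_one, map_zpow₀]
    congr 2
    rw [show (@algebraMap (RatFunc ℚ) (LaurentSeries ℚ) _ _ (RatFunc.liftAlgebra _ _) RatFunc.X : LaurentSeries ℚ)
        = ((RatFunc.X : RatFunc ℚ) : LaurentSeries ℚ) from rfl, RatFunc.coe_X,
      ← RatFunc.single_zpow]
  have key : ∀ s : Finset (Fin k),
      (∏ i ∈ s, ((1 : LaurentSeries ℚ) - single (μ i) 1) ^ (r i)) ≠ 0 ∧
      (∏ i ∈ s, ((1 : LaurentSeries ℚ) - single (μ i) 1) ^ (r i)).order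
        = ∑ i ∈ s, (r i : ℤ) * min (μ i) 0 := by
    intro s
    induction s using Finset.induction with
    | empty => simp
    | @insert a s ha ih =>
      have hb : ((1 : LaurentSeries ℚ) - single (μ a) 1) ^ (r a) ≠ 0 :=
        pow_ne_zero _ (one_sub_single_ne_zero (hμ a))
      refine ⟨by rw [Finset.prod_insert ha]; exact mul_ne_zero hb ih.1, ?_⟩
      rw [Finset.prod_insert ha, HahnSeries.order_mul hb ih.1, ih.2,
        HahnSeries.order_pow, order_one_sub_single (hμ a), Finset.sum_insert ha,
        nsmul_eq_mul]
  have hFne : (F : LaurentSeries ℚ) ≠ 0 := by rw [hF]; exact (key Finset.univ).1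
  have horder : ((F : LaurentSeries ℚ)).order = ∑ i, (r i : ℤ) * min (μ i) 0 := by
    rw [hF]; exact (key Finset.univ).2
  have hsum : ∑ i, (r i : ℤ) * min (μ i) 0 < 0 := by
    obtain ⟨j, hj⟩ := hneg
    calc ∑ i, (r i : ℤ) * min (μ i) 0 < ∑ _i : Fin k, (0 : ℤ) := by
          apply Finset.sum_lt_sum
          · intro i _
            calc (r i : ℤ) * min (μ i) 0 ≤ (r i : ℤ) * 0 :=
                  mul_le_mul_of_nonneg_left (min_le_right _ _) (by positivity)
              _ = 0 := mul_zero _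
          · exact ⟨j, Finset.mem_univ j, by
              rw [min_eq_left hj.le]
              exact mul_neg_of_pos_of_neg (by exact_mod_cast hr j) hj⟩
      _ = 0 := Finset.sum_const_zero
  have hinv_ne : ((F : LaurentSeries ℚ))⁻¹ ≠ 0 := inv_ne_zero hFne
  have hord_inv : (0 : ℤ) < ((F : LaurentSeries ℚ))⁻¹.order := by
    have h1 : ((F : LaurentSeries ℚ) * (F : LaurentSeries ℚ)⁻¹).order = 0 := by
      rw [mul_inv_cancel₀ hFne, HahnSeries.order_one]
    rw [HahnSeries.order_mul hFne hinv_ne] at h1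
    omega
  exact HahnSeries.coeff_eq_zero_of_lt_order hord_inv

/-- Let `μ₁, …, μₖ` be nonzero integers, `r₁, …, rₖ` positive integers, with at least one
positive and at least one negative weight.  Then the residue of
`f(z) = ∏ i (1 - z^{-μ i})^{-r i}` vanishes: the constant coefficient of the Laurent
expansion of `f` at `0` is zero, the constant coefficient of the expansion at infinity
(i.e. of `f(1/z) = ∏ i (1 - z^{μ i})^{-r i}` at `0`) is zero, and hence the residue
(their difference) is zero. -/
theorem residue_mixed_weights_eq_zero (k : ℕ) (μ : Fin k → ℤ) (r : Fin k → ℕ)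
    (hμ : ∀ i, μ i ≠ 0) (hr : ∀ i, 0 < r i)
    (hpos : ∃ i, 0 < μ i) (hneg : ∃ j, μ j < 0) :
    (((∏ i, (1 - RatFunc.X ^ (μ i)) ^ (r i) : RatFunc ℚ)⁻¹ : LaurentSeries ℚ)).coeff 0 = 0 ∧
    (((∏ i, (1 - RatFunc.X ^ (-μ i)) ^ (r i) : RatFunc ℚ)⁻¹ : LaurentSeries ℚ)).coeff 0 = 0 ∧
    (((∏ i, (1 - RatFunc.X ^ (μ i)) ^ (r i) : RatFunc ℚ)⁻¹ : LaurentSeries ℚ)).coeff 0 -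
      (((∏ i, (1 - RatFunc.X ^ (-μ i)) ^ (r i) : RatFunc ℚ)⁻¹ : LaurentSeries ℚ)).coeff 0
        = 0 := by
  have h1 := aux_coeff_zero k μ r hμ hr hneg
  have h2 := aux_coeff_zero k (fun i => -μ i) r (fun i => neg_ne_zero.mpr (hμ i)) hr
    (hpos.imp fun i hi => neg_neg_iff_pos.mpr hi)
  exact ⟨h1, h2, by rw [h1, h2, sub_zero]⟩

end
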